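/- arXiv:2306.08857 — 3 statements merged into one kernel-verified Lean document; each statement's English description precedes it below -/
import Mathlib

section
/- Let U be a finite-dimensional complex vector space with basis B, let w : U → U be a linear operator, and suppose for i = 1,2 there are bijections ξᵢ : B → B and preorders ≤ᵢ on B such that w acts on (U, B, ≤ᵢ) by ξᵢ up to lower-order terms. Then ξ₁ = ξ₂. -/
open scoped Classical

noncomputable section

/-- `w` acts on the based vector space `(U, b)` equipped with the preorder `le` by the
bijection `ξ` up to lower-order terms: for every basis element `x` there are integers `a y`
with `w (b x) = ± b (ξ x) + ∑_{y < x} a_y • b (ξ y)`, where the sign depends only on the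
equivalence class of `x` under the preorder. -/
def ActsByLOT {B U : Type*} [Fintype B] [AddCommGroup U] [Module ℂ U]
    (b : Module.Basis B ℂ U) (w : U →ₗ[ℂ] U) (ξ : Equiv.Perm B) (le : B → B → Prop) : Prop :=
  ∃ ε : B → ℂ, (∀ x, ε x = 1 ∨ ε x = -1) ∧
    (∀ x y, le x y → le y x → ε x = ε y) ∧
    ∀ x : B, ∃ a : B → ℤ,
      w (b x) = ε x • b (ξ x) +
        ∑ y : B, if le y x ∧ ¬ le x y then (a y : ℂ) • b (ξ y) else 0

/-- If `w` acts on `(U, B, ≤ᵢ)` by `ξᵢ` up to lower-order terms for two bijections and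
two preorders, then the bijections agree. -/
theorem lot_bijection_unique {B U : Type*} [Fintype B] [AddCommGroup U] [Module ℂ U]
    (b : Module.Basis B ℂ U) (w : U →ₗ[ℂ] U)
    (ξ₁ ξ₂ : Equiv.Perm B) (le₁ le₂ : B → B → Prop)
    (h₁refl : ∀ x, le₁ x x) (h₁trans : ∀ x y z, le₁ x y → le₁ y z → le₁ x z)
    (h₂refl : ∀ x, le₂ x x) (h₂trans : ∀ x y z, le₂ x y → le₂ y z → le₂ x z)
    (h₁ : ActsByLOT b w ξ₁ le₁) (h₂ : ActsByLOT b w ξ₂ le₂) :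
    ξ₁ = ξ₂ := by
  obtain ⟨ε₁, hε₁, -, hw₁⟩ := h₁
  obtain ⟨ε₂, hε₂, -, hw₂⟩ := h₂
  have hεne : ∀ x, ε₁ x ≠ 0 := by
    intro x; rcases hε₁ x with h | h <;> rw [h] <;> norm_num
  -- the coefficient of `b (ξ₁ x)` in `w (b x)` is `ε₁ x`
  have key : ∀ x, b.repr (w (b x)) (ξ₁ x) = ε₁ x := by
    intro x
    obtain ⟨a, ha⟩ := hw₁ x
    rw [ha, map_add, map_smul, map_sum, Finsupp.add_apply, Finsupp.smul_apply,
        Module.Basis.repr_self, Finsupp.single_eq_same, Finsupp.finset_sum_apply]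
    have hterm : ∀ y ∈ Finset.univ,
        (b.repr (if le₁ y x ∧ ¬ le₁ x y then (a y : ℂ) • b (ξ₁ y) else 0)) (ξ₁ x) = 0 := by
      intro y _
      split_ifs with h
      · rw [map_smul, Finsupp.smul_apply, Module.Basis.repr_self, Finsupp.single_apply]
        have hne : ¬ (ξ₁ y = ξ₁ x) := by
          intro he
          have : y = x := ξ₁.injective he
          subst this
          exact h.2 (h₁refl y)
        simp [hne]
      · simp
    rw [Finset.sum_congr rfl hterm]
    simp
  -- if `ξ₁ x ≠ ξ₂ x` then `ξ₂.symm (ξ₁ x)` is strictly `le₂`-below `x`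
  have step : ∀ x, ξ₁ x ≠ ξ₂ x →
      le₂ (ξ₂.symm (ξ₁ x)) x ∧ ¬ le₂ x (ξ₂.symm (ξ₁ x)) := by
    intro x hne
    by_contra hc
    obtain ⟨a, ha⟩ := hw₂ x
    have h0 : b.repr (w (b x)) (ξ₁ x) = 0 := by
      rw [ha, map_add, map_smul, map_sum, Finsupp.add_apply, Finsupp.smul_apply,
          Module.Basis.repr_self, Finsupp.single_apply, Finsupp.finset_sum_apply]
      have hterm : ∀ y ∈ Finset.univ,
          (b.repr (if le₂ y x ∧ ¬ le₂ x y then (a y : ℂ) • b (ξ₂ y) else 0)) (ξ₁ x) = 0 := by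
        intro y _
        split_ifs with h
        · rw [map_smul, Finsupp.smul_apply, Module.Basis.repr_self, Finsupp.single_apply]
          have hne2 : ¬ (ξ₂ y = ξ₁ x) := by
            intro he
            have hy : y = ξ₂.symm (ξ₁ x) := by rw [← he]; simp
            rw [hy] at h
            exact hc h
          simp [hne2]
        · simp
      rw [Finset.sum_congr rfl hterm]
      have hne3 : ¬ (ξ₂ x = ξ₁ x) := fun h => hne h.symm
      simp [hne3]
    exact hεne x ((key x).symm.trans h0)
  -- conclude by well-foundedness of the strict order on the finite type `B`
  ext x
  by_contra hne
  let r : B → B → Prop := fun u v => le₂ u v ∧ ¬ le₂ v u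
  have htrans : IsTrans B r :=
    ⟨fun u v c huv hvc => ⟨h₂trans _ _ _ huv.1 hvc.1,
      fun h => huv.2 (h₂trans _ _ _ hvc.1 h)⟩⟩
  have hirr : IsIrrefl B r := ⟨fun u h => h.2 h.1⟩
  have hwf : WellFounded r := Finite.wellFounded_of_trans_of_irrefl r
  set S : Set B := {z | ξ₁ z ≠ ξ₂ z} with hS
  have hSne : S.Nonempty := ⟨x, hne⟩
  set m := hwf.min S hSne with hm
  have hmS : m ∈ S := hwf.min_mem S hSne
  have hstep := step m hmS
  have hfS : ξ₂.symm (ξ₁ m) ∈ S := by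
    intro hfe
    have : ξ₁ (ξ₂.symm (ξ₁ m)) = ξ₁ m := by
      rw [hfe]; simp
    have hm2 : ξ₂.symm (ξ₁ m) = m := ξ₁.injective this
    rw [hm2] at hstep
    exact hstep.2 hstep.1
  exact hwf.not_lt_min S hfS hstep
end
end

section
/- Suppose a linear operator w acts on a finite-dimensional based vector space (U, B, ≤) by a bijection ξ up to lower-order terms, and let ⪯ be a total order on B linearising the preorder ≤. Then the matrix [w] of w with respect to the ordered basis (B, ⪯) has a QR decomposition [w] = QR in which the orthogonal factor Q is a generalised permutation matrix for ξ with nonzero entries ±1, and R is an upper-triangular integer matrix with all diagonal entries equal to 1. -/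
open scoped Classical

noncomputable section

/-- If `w` acts on `(U, B, ≤)` by `ξ` up to lower-order terms and `⪯` (the given linear
order on `B`) linearises the preorder `≤`, then the matrix of `w` in the ordered basis
`(B, ⪯)` has a QR decomposition whose orthogonal factor is a generalised permutation
matrix for `ξ` with nonzero entries `±1`, and whose triangular factor is an
upper-triangular integer matrix with diagonal entries `1`. -/
theorem lot_QR {B U : Type*} [Fintype B] [DecidableEq B] [LinearOrder B]
    [AddCommGroup U] [Module ℂ U]
    (b : Module.Basis B ℂ U) (w : U →ₗ[ℂ] U) (ξ : Equiv.Perm B) (le : B → B → Prop)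
    (hrefl : ∀ x, le x x) (htrans : ∀ x y z, le x y → le y z → le x z)
    (hlin : ∀ x y, le x y → ¬ le y x → x < y)
    (h : ActsByLOT b w ξ le) :
    ∃ Q R : Matrix B B ℂ,
      LinearMap.toMatrix b b w = Q * R ∧
      Q.transpose * Q = 1 ∧ Q * Q.transpose = 1 ∧
      (∃ ε : B → ℂ, (∀ x, ε x = 1 ∨ ε x = -1) ∧
        ∀ i j, Q i j = if i = ξ j then ε j else 0) ∧
      (∀ i j : B, j < i → R i j = 0) ∧
      (∀ i : B, R i i = 1) ∧
      (∀ i j : B, ∃ m : ℤ, R i j = (m : ℂ)) := by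
  obtain ⟨ε, hε, hεeq, hw⟩ := h
  choose a ha using hw
  set M : Matrix B B ℂ := LinearMap.toMatrix b b w with hMdef
  set Q : Matrix B B ℂ := Matrix.of fun i j => if i = ξ j then ε j else 0 with hQdef
  have hεsq : ∀ x, ε x * ε x = 1 := fun x => by rcases hε x with h1 | h1 <;> simp [h1]
  have hQtQ : Q.transpose * Q = 1 := by
    ext j k
    simp only [Matrix.mul_apply, Matrix.transpose_apply, hQdef, Matrix.of_apply,
      Matrix.one_apply, ite_mul, zero_mul, mul_ite, mul_zero]
    rw [Finset.sum_ite_eq' Finset.univ (ξ k)]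
    simp only [Finset.mem_univ, if_true, EmbeddingLike.apply_eq_iff_eq]
    by_cases hjk : j = k
    · subst hjk; simp [hεsq]
    · simp [hjk, Ne.symm hjk]
  have hQQt : Q * Q.transpose = 1 := mul_eq_one_comm.mp hQtQ
  have hM : ∀ j x, M (ξ j) x =
      (if j = x then ε x else 0) + (if le j x ∧ ¬ le x j then (a x j : ℂ) else 0) := by
    intro j x
    rw [hMdef, LinearMap.toMatrix_apply, ha x]
    simp only [map_add, map_smul, map_sum, Finsupp.coe_add, Finsupp.coe_smul,
      Pi.add_apply, Pi.smul_apply, Module.Basis.repr_self, Finsupp.single_apply]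
    rw [Finset.sum_apply']
    have : ∀ y : B, (b.repr (if le y x ∧ ¬ le x y then (a x y : ℂ) • b (ξ y) else 0)) (ξ j)
        = if ξ y = ξ j then (if le y x ∧ ¬ le x y then (a x y : ℂ) else 0) else 0 := by
      intro y
      by_cases hc : le y x ∧ ¬ le x y
      · simp [hc, Finsupp.single_apply]
      · simp [hc]
    rw [Finset.sum_congr rfl fun y _ => this y]
    simp only [EmbeddingLike.apply_eq_iff_eq, smul_eq_mul]
    rw [Finset.sum_ite_eq' Finset.univ j]
    simp only [Finset.mem_univ, if_true]
    by_cases hjx : j = x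
    · subst hjx; simp
    · simp [hjx, Ne.symm hjx]
  refine ⟨Q, Q.transpose * M, ?_, hQtQ, hQQt, ⟨ε, hε, fun i j => rfl⟩, ?_, ?_, ?_⟩
  · rw [← Matrix.mul_assoc, hQQt, Matrix.one_mul]
  · intro i j hji
    have hRij : (Q.transpose * M) i j = ε i * M (ξ i) j := by
      simp only [Matrix.mul_apply, Matrix.transpose_apply, hQdef, Matrix.of_apply,
        ite_mul, zero_mul]
      rw [Finset.sum_ite_eq' Finset.univ (ξ i)]
      simp
    rw [hRij, hM]
    have hij : i ≠ j := ne_of_gt hji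
    rw [if_neg hij]
    have : ¬ (le i j ∧ ¬ le j i) := by
      rintro ⟨h1, h2⟩
      exact absurd (hlin i j h1 h2) (not_lt_of_gt hji)
    rw [if_neg this]
    ring
  · intro i
    have hRii : (Q.transpose * M) i i = ε i * M (ξ i) i := by
      simp only [Matrix.mul_apply, Matrix.transpose_apply, hQdef, Matrix.of_apply,
        ite_mul, zero_mul]
      rw [Finset.sum_ite_eq' Finset.univ (ξ i)]
      simp
    rw [hRii, hM]
    simp [hrefl i, hεsq i]
  · intro i j
    have hRij : (Q.transpose * M) i j = ε i * M (ξ i) j := by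
      simp only [Matrix.mul_apply, Matrix.transpose_apply, hQdef, Matrix.of_apply,
        ite_mul, zero_mul]
      rw [Finset.sum_ite_eq' Finset.univ (ξ i)]
      simp
    rw [hRij, hM]
    by_cases hij : i = j
    · subst hij
      simp only [if_pos rfl]
      rcases hε i with h1 | h1
      · exact ⟨1, by simp [h1, hεsq i]⟩
      · exact ⟨1, by rw [h1]; norm_num⟩
    · rw [if_neg hij, zero_add]
      by_cases hc : le i j ∧ ¬ le j i
      · rw [if_pos hc]
        rcases hε i with h1 | h1
        · exact ⟨a j i, by rw [h1, one_mul]⟩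
        · exact ⟨-(a j i), by rw [h1]; push_cast; ring⟩
      · exact ⟨0, by rw [if_neg hc]; simp⟩
end
end

section
/- Let A be an n×n integer matrix representing an operator w on a based vector space (U, B) with respect to some fixed ordering of B. Then w acts on (U, B) by some bijection up to lower-order terms (for some preorder on B) if and only if there exist permutation matrices P₁, P₂ such that P₁ A P₂ is upper-triangular with integer entries and all diagonal entries equal to ±1. -/
open scoped Classical

noncomputable section

/-- The permutation matrix of `σ` (over `ℤ`). -/
def permMat (n : ℕ) (σ : Equiv.Perm (Fin n)) : Matrix (Fin n) (Fin n) ℤ :=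
  fun i j => if σ j = i then 1 else 0

theorem permMat_entry (n : ℕ) (A : Matrix (Fin n) (Fin n) ℤ) (σ τ : Equiv.Perm (Fin n))
    (i j : Fin n) : (permMat n σ * A * permMat n τ) i j = A (σ⁻¹ i) (τ j) := by
  simp only [permMat, Matrix.mul_apply, Equiv.apply_eq_iff_eq_symm_apply, Equiv.Perm.inv_def,
    ite_mul, mul_ite, one_mul, mul_one, zero_mul, mul_zero, Finset.sum_ite_eq',
    Finset.mem_univ, if_true]
  rw [Finset.sum_eq_single (τ j)] <;>
    simp (config := {contextual := true}) [Equiv.eq_symm_apply, eq_comm]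

theorem exists_linext (n : ℕ) (le : Fin n → Fin n → Prop)
    (hrefl : ∀ x, le x x) (htrans : ∀ x y z, le x y → le y z → le x z) :
    ∃ τ : Equiv.Perm (Fin n), ∀ x y, le x y → ¬ le y x → τ.symm x < τ.symm y := by
  set r : Fin n → Fin n → Prop := fun x y => x = y ∨ (le x y ∧ ¬ le y x) with hr
  have rtrans : ∀ x y z, r x y → r y z → r x z := by
    rintro x y z (rfl | ⟨h1, h2⟩) (rfl | ⟨h3, h4⟩)
    · exact Or.inl rfl
    · exact Or.inr ⟨h3, h4⟩
    · exact Or.inr ⟨h1, h2⟩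
    · exact Or.inr ⟨htrans _ _ _ h1 h3, fun h => h4 (htrans _ _ _ h h1)⟩
  haveI : IsPartialOrder (Fin n) r :=
    { refl := fun x => Or.inl rfl
      trans := rtrans
      antisymm := by
        rintro x y (h | ⟨h1, h2⟩) (h' | ⟨h3, h4⟩)
        · exact h
        · exact h
        · exact h'.symm
        · exact absurd h1 h4 }
  obtain ⟨s, hs, hrs⟩ := extend_partialOrder r
  haveI : IsLinearOrder (Fin n) s := hs
  set l : List (Fin n) := Finset.univ.sort s with hl
  have hlen : l.length = n := by simp [hl, Finset.length_sort]
  have hnd : l.Nodup := Finset.sort_nodup (s := Finset.univ) (r := s)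
  have hsort : l.Pairwise s := Finset.pairwise_sort (s := Finset.univ) (r := s)
  set e : Fin n → Fin n := fun i => l.get (Fin.cast hlen.symm i) with he
  have hinj : Function.Injective e := by
    intro a c h
    have h2 := List.nodup_iff_injective_get.mp hnd h
    have : (Fin.cast hlen.symm a : Fin l.length).val = (Fin.cast hlen.symm c).val :=
      congrArg Fin.val h2
    exact Fin.ext this
  have hbij : Function.Bijective e := Finite.injective_iff_bijective.mp hinj
  refine ⟨Equiv.ofBijective e hbij, ?_⟩
  intro x y hxy hnyx
  set τ := Equiv.ofBijective e hbij with hτ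
  have hex : e (τ.symm x) = x := τ.apply_symm_apply x
  have hey : e (τ.symm y) = y := τ.apply_symm_apply y
  have hne : x ≠ y := fun h => hnyx (h ▸ hrefl x)
  rcases lt_trichotomy (τ.symm x) (τ.symm y) with h | h | h
  · exact h
  · exact absurd (by rw [← hex, ← hey, h]) hne
  · exfalso
    have hlt : (Fin.cast hlen.symm (τ.symm y)) < (Fin.cast hlen.symm (τ.symm x)) := by
      rw [Fin.lt_def, Fin.coe_cast, Fin.coe_cast]
      exact h
    have hsyx : s y x := hey ▸ hex ▸ hsort.rel_get_of_lt hlt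
    have hsxy : s x y := hrs _ _ (Or.inr ⟨hxy, hnyx⟩)
    exact hne (antisymm hsxy hsyx)

/-- An operator `w` whose matrix with respect to a fixed ordered basis is the integer
matrix `A` acts by some bijection up to lower-order terms (for some preorder) iff there
are permutation matrices `P₁, P₂` for which `P₁ * A * P₂` is upper-triangular with all
diagonal entries `±1`. -/
theorem lot_iff_triangularizable (n : ℕ) (A : Matrix (Fin n) (Fin n) ℤ)
    {U : Type*} [AddCommGroup U] [Module ℂ U] (b : Module.Basis (Fin n) ℂ U)
    (w : U →ₗ[ℂ] U)
    (hw : LinearMap.toMatrix b b w = A.map (Int.cast : ℤ → ℂ)) :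
    (∃ (ξ : Equiv.Perm (Fin n)) (le : Fin n → Fin n → Prop),
        (∀ x, le x x) ∧ (∀ x y z, le x y → le y z → le x z) ∧
        ActsByLOT b w ξ le) ↔
    (∃ σ τ : Equiv.Perm (Fin n),
        (∀ i j : Fin n, j < i → (permMat n σ * A * permMat n τ) i j = 0) ∧
        (∀ i : Fin n, (permMat n σ * A * permMat n τ) i i = 1 ∨
          (permMat n σ * A * permMat n τ) i i = -1)) := by
  have hA : ∀ i x : Fin n, b.repr (w (b x)) i = (A i x : ℂ) := by
    intro i x
    rw [← LinearMap.toMatrix_apply, hw, Matrix.map_apply]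
  constructor
  · rintro ⟨ξ, le, hrefl, htrans, ε, hε, hconst, hmain⟩
    obtain ⟨τ, hτ⟩ := exists_linext n le hrefl htrans
    -- entry computations
    have key : ∀ x : Fin n, ∃ a : Fin n → ℤ, ∀ i : Fin n,
        (A i x : ℂ) = ε x * (if ξ x = i then 1 else 0) +
          ∑ y : Fin n, (if le y x ∧ ¬ le x y then (a y : ℂ) * (if ξ y = i then 1 else 0)
            else 0) := by
      intro x
      obtain ⟨a, ha⟩ := hmain x
      refine ⟨a, fun i => ?_⟩
      rw [← hA, ha, map_add, map_smul, map_sum, Finsupp.add_apply, Finsupp.smul_apply,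
        Module.Basis.repr_self, smul_eq_mul, Finsupp.single_apply, Finset.sum_apply']
      congr 1
      refine Finset.sum_congr rfl fun y _ => ?_
      by_cases h : le y x ∧ ¬ le x y
      · rw [if_pos h, if_pos h, map_smul, Finsupp.smul_apply, Module.Basis.repr_self,
          smul_eq_mul, Finsupp.single_apply]
      · rw [if_neg h, if_neg h, map_zero, Finsupp.coe_zero, Pi.zero_apply]
    have keydiag : ∀ x, (A (ξ x) x : ℂ) = ε x := by
      intro x
      obtain ⟨a, ha⟩ := key x
      have hz : (∑ y : Fin n, (if le y x ∧ ¬ le x y then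
          (a y : ℂ) * (if ξ y = ξ x then 1 else 0) else 0)) = 0 := by
        refine Finset.sum_eq_zero fun y _ => ?_
        split_ifs with h1 h2
        · exfalso; obtain rfl := ξ.injective h2; exact h1.2 h1.1
        · exact mul_zero _
        · rfl
      rw [ha (ξ x), if_pos rfl, mul_one, hz, add_zero]
    have keyoff : ∀ x x' : Fin n, x' ≠ x → ¬(le x' x ∧ ¬ le x x') →
        (A (ξ x') x : ℂ) = 0 := by
      intro x x' hne hns
      obtain ⟨a, ha⟩ := key x
      have hz : (∑ y : Fin n, (if le y x ∧ ¬ le x y then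
          (a y : ℂ) * (if ξ y = ξ x' then 1 else 0) else 0)) = 0 := by
        refine Finset.sum_eq_zero fun y _ => ?_
        split_ifs with h1 h2
        · exfalso; obtain rfl := ξ.injective h2; exact hns h1
        · exact mul_zero _
        · rfl
      rw [ha (ξ x'), if_neg (fun h => hne (ξ.injective h).symm), mul_zero, zero_add, hz]
    refine ⟨(τ.trans ξ).symm, τ, ?_, ?_⟩
    · intro i j hji
      rw [permMat_entry]
      have h1 : ((τ.trans ξ).symm)⁻¹ i = ξ (τ i) := by
        simp [Equiv.Perm.inv_def]
      rw [h1]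
      have : (A (ξ (τ i)) (τ j) : ℂ) = 0 := by
        apply keyoff
        · exact fun h => (ne_of_lt hji).symm (τ.injective h)
        · rintro ⟨hl1, hl2⟩
          have := hτ _ _ hl1 hl2
          simp only [Equiv.symm_apply_apply] at this
          exact absurd hji (not_lt_of_gt this)
      exact_mod_cast this
    · intro i
      rw [permMat_entry]
      have h1 : ((τ.trans ξ).symm)⁻¹ i = ξ (τ i) := by
        simp [Equiv.Perm.inv_def]
      rw [h1]
      have hd := keydiag (τ i)
      rcases hε (τ i) with h | h
      · left; rw [h] at hd; exact_mod_cast hd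
      · right; rw [h] at hd; exact_mod_cast hd
  · rintro ⟨σ, τ, htri, hdiag⟩
    set M : Matrix (Fin n) (Fin n) ℤ := permMat n σ * A * permMat n τ with hM
    refine ⟨τ.symm.trans σ.symm, fun x y => τ.symm x ≤ τ.symm y,
      fun x => le_refl _, fun x y z h1 h2 => le_trans h1 h2,
      fun x => ((M (τ.symm x) (τ.symm x) : ℤ) : ℂ), ?_, ?_, ?_⟩
    · intro x
      rcases hdiag (τ.symm x) with h | h
      · left
        show ((M (τ.symm x) (τ.symm x) : ℤ) : ℂ) = 1
        rw [h]; norm_num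
      · right
        show ((M (τ.symm x) (τ.symm x) : ℤ) : ℂ) = -1
        rw [h]; norm_num
    · intro x y hxy hyx
      have : τ.symm x = τ.symm y := le_antisymm hxy hyx
      show ((M (τ.symm x) (τ.symm x) : ℤ) : ℂ) = ((M (τ.symm y) (τ.symm y) : ℤ) : ℂ)
      rw [this]
    · intro x
      set j := τ.symm x with hj
      refine ⟨fun y => M (τ.symm y) j, ?_⟩
      have hAM : ∀ k, ((A (σ.symm k) x : ℤ) : ℂ) = ((M k j : ℤ) : ℂ) := by
        intro k
        rw [hM, permMat_entry, Equiv.Perm.inv_def, hj, Equiv.apply_symm_apply]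
      have hwx : w (b x) = ∑ k : Fin n, ((M k j : ℤ) : ℂ) • b (σ.symm k) := by
        rw [← b.sum_repr (w (b x))]
        rw [← Equiv.sum_comp σ.symm (fun i => b.repr (w (b x)) i • b i)]
        refine Finset.sum_congr rfl fun k _ => ?_
        rw [hA, hAM]
      have hR : (∑ y : Fin n, if (τ.symm y ≤ j ∧ ¬ j ≤ τ.symm y) then
            ((M (τ.symm y) j : ℤ) : ℂ) • b (σ.symm (τ.symm y)) else 0) =
          ∑ k : Fin n, if k < j then ((M k j : ℤ) : ℂ) • b (σ.symm k) else 0 := by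
        rw [← Equiv.sum_comp τ (fun y => if (τ.symm y ≤ j ∧ ¬ j ≤ τ.symm y) then
            ((M (τ.symm y) j : ℤ) : ℂ) • b (σ.symm (τ.symm y)) else 0)]
        refine Finset.sum_congr rfl fun k _ => ?_
        simp only [Equiv.symm_apply_apply]
        exact if_congr lt_iff_le_not_ge.symm rfl rfl
      have key2 : (∑ k : Fin n, ((M k j : ℤ) : ℂ) • b (σ.symm k)) =
          ((M j j : ℤ) : ℂ) • b (σ.symm j) +
          ∑ y : Fin n, if (τ.symm y ≤ j ∧ ¬ j ≤ τ.symm y) then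
            ((M (τ.symm y) j : ℤ) : ℂ) • b (σ.symm (τ.symm y)) else 0 := by
        rw [hR]
        rw [← Finset.add_sum_erase Finset.univ
          (fun k => ((M k j : ℤ) : ℂ) • b (σ.symm k)) (Finset.mem_univ j)]
        congr 1
        rw [← Finset.sum_erase (s := Finset.univ) (a := j)
          (f := fun k => if k < j then ((M k j : ℤ) : ℂ) • b (σ.symm k) else 0)
          (by simp)]
        refine Finset.sum_congr rfl fun k hk => ?_
        have hkj : k ≠ j := Finset.ne_of_mem_erase hk
        rcases lt_trichotomy k j with h | h | h
        · rw [if_pos h]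
        · exact absurd h hkj
        · rw [if_neg (not_lt_of_gt h), htri k j h]
          simp
      rw [hwx, key2]
      congr 1
      refine Finset.sum_congr rfl fun y _ => ?_
      congr 1
end
end
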